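/- (Lemma A3) Let ε and L be independent real-valued random variables with ε distributed as the standard normal N(0,1) and L distributed as L_{K,a}. For all nonnegative reals b₁ ≤ c₁ and b₂ ≤ c₂ and every c ≥ 0, P(|b₁ε + b₂L| ≤ c) ≥ P(|c₁ε + c₂L| ≤ c); consequently, for every α ∈ (0,1), the symmetric 1−α quantile range of b₁ε + b₂L is narrower than or equal to that of c₁ε + c₂L. -/

import Mathlib

open MeasureTheory ProbabilityTheory Set
open scoped ENNReal NNReal

namespace Statement17Aux

/-- symmetric and nonincreasing in `|x|` -/
def SymmDec (f : ℝ → ℝ≥0∞) : Prop := ∀ x y : ℝ, |x| ≤ |y| → f y ≤ f x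

lemma SymmDec.even {f : ℝ → ℝ≥0∞} (hf : SymmDec f) (x : ℝ) : f (-x) = f x :=
  le_antisymm (hf x (-x) (by simp)) (hf (-x) x (by simp))

lemma core_nonneg {f : ℝ → ℝ≥0∞} (hmf : Measurable f) (hf : SymmDec f)
    {r m m' : ℝ} (hr : 0 ≤ r) (hm : 0 ≤ m) (hmm : m ≤ m') :
    ∫⁻ x in Icc (m' - r) (m' + r), f x ≤ ∫⁻ x in Icc (m - r) (m + r), f x := by
  rcases le_or_gt m' (m + 2 * r) with hcase | hcase
  · -- overlapping case
    have h1 : m' - r ≤ m + r := by linarith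
    have h2 : m - r ≤ m' - r := by linarith
    have h3 : m + r ≤ m' + r := by linarith
    have hL : ∫⁻ x in Icc (m' - r) (m' + r), f x
        = (∫⁻ x in Icc (m' - r) (m + r), f x) + ∫⁻ x in Ioc (m + r) (m' + r), f x := by
      rw [← lintegral_union measurableSet_Ioc
        (Set.disjoint_left.mpr fun x hx hx' => absurd hx.2 (not_le.mpr hx'.1)),
        Set.Icc_union_Ioc_eq_Icc h1 h3]
    have htrans : ∫⁻ x in Ioc (m + r) (m' + r), f x
        = ∫⁻ x in Ioc (m - r) (m' - r), f (x + 2 * r) := by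
      have hpre : (fun x : ℝ => x + 2 * r) ⁻¹' Ioc (m + r) (m' + r) = Ioc (m - r) (m' - r) := by
        ext x
        simp only [mem_preimage, mem_Ioc]
        constructor <;> intro hx <;> exact ⟨by linarith [hx.1], by linarith [hx.2]⟩
      rw [← hpre]
      exact ((measurePreserving_add_right volume (2 * r)).setLIntegral_comp_preimage_emb
        (measurableEmbedding_addRight (2 * r)) f _).symm
    have hI2 : ∫⁻ x in Ioc (m + r) (m' + r), f x ≤ ∫⁻ x in Ico (m - r) (m' - r), f x := by
      rw [htrans, setLIntegral_congr Ico_ae_eq_Icc, ← setLIntegral_congr (Ioc_ae_eq_Icc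
        (a := m - r) (b := m' - r) (μ := volume))]
      refine setLIntegral_mono hmf fun x hx => ?_
      refine hf x (x + 2 * r) ?_
      have hx1 : m - r < x := hx.1
      have : 0 ≤ x + 2 * r := by linarith
      rw [abs_of_nonneg this, abs_le]
      constructor <;> linarith
    calc ∫⁻ x in Icc (m' - r) (m' + r), f x
        = (∫⁻ x in Icc (m' - r) (m + r), f x) + ∫⁻ x in Ioc (m + r) (m' + r), f x := hL
      _ ≤ (∫⁻ x in Icc (m' - r) (m + r), f x) + ∫⁻ x in Ico (m - r) (m' - r), f x :=
          add_le_add le_rfl hI2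
      _ = ∫⁻ x in Ico (m - r) (m' - r) ∪ Icc (m' - r) (m + r), f x := by
          rw [lintegral_union measurableSet_Icc
            (Set.disjoint_left.mpr fun x hx hx' => absurd hx'.1 (not_le.mpr hx.2)), add_comm]
      _ ≤ ∫⁻ x in Icc (m - r) (m + r), f x := by
          refine lintegral_mono_set ?_
          rintro x (hx | hx)
          · exact ⟨hx.1, by linarith [hx.2]⟩
          · exact ⟨by linarith [hx.1], hx.2⟩
  · -- disjoint case: translate by m' - m
    have htrans : ∫⁻ x in Icc (m' - r) (m' + r), f x
        = ∫⁻ x in Icc (m - r) (m + r), f (x + (m' - m)) := by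
      have hpre : (fun x : ℝ => x + (m' - m)) ⁻¹' Icc (m' - r) (m' + r) = Icc (m - r) (m + r) := by
        ext x
        simp only [mem_preimage, mem_Icc]
        constructor <;> intro hx <;> exact ⟨by linarith [hx.1], by linarith [hx.2]⟩
      rw [← hpre]
      exact ((measurePreserving_add_right volume (m' - m)).setLIntegral_comp_preimage_emb
        (measurableEmbedding_addRight (m' - m)) f _).symm
    rw [htrans]
    refine setLIntegral_mono hmf fun x hx => ?_
    refine hf x (x + (m' - m)) ?_
    have hx1 : m - r ≤ x := hx.1
    have hx2 : x ≤ m + r := hx.2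
    have : 0 ≤ x + (m' - m) := by linarith
    rw [abs_of_nonneg this, abs_le]
    constructor <;> linarith


lemma refl_eq {f : ℝ → ℝ≥0∞} (hf : SymmDec f) (p q : ℝ) :
    ∫⁻ x in Icc p q, f x = ∫⁻ x in Icc (-q) (-p), f x := by
  have hpre : (fun x : ℝ => -x) ⁻¹' Icc p q = Icc (-q) (-p) := by
    ext x
    simp only [mem_preimage, mem_Icc]
    constructor <;> intro hx <;> exact ⟨by linarith [hx.2], by linarith [hx.1]⟩
  have := (Measure.measurePreserving_neg (volume : Measure ℝ)).setLIntegral_comp_preimage_emb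
    measurableEmbedding_neg f (Icc p q)
  rw [hpre] at this
  rw [← this]
  exact lintegral_congr fun x => hf.even x

lemma core {f : ℝ → ℝ≥0∞} (hmf : Measurable f) (hf : SymmDec f)
    {r m m' : ℝ} (hr : 0 ≤ r) (h : |m| ≤ |m'|) :
    ∫⁻ x in Icc (m' - r) (m' + r), f x ≤ ∫⁻ x in Icc (m - r) (m + r), f x := by
  have habs : ∀ t : ℝ, ∫⁻ x in Icc (t - r) (t + r), f x
      = ∫⁻ x in Icc (|t| - r) (|t| + r), f x := by
    intro t
    rcases abs_cases t with ⟨ht, _⟩ | ⟨ht, _⟩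
    · rw [ht]
    · rw [refl_eq hf (t - r) (t + r), ht]
      ring_nf
  rw [habs m, habs m']
  exact core_nonneg hmf hf hr (abs_nonneg m) h

lemma symmDec_gaussianPDF : SymmDec (gaussianPDF 0 1) := by
  intro x y h
  refine ENNReal.ofReal_le_ofReal ?_
  unfold gaussianPDFReal
  refine mul_le_mul_of_nonneg_left ?_ (by positivity)
  refine Real.exp_le_exp.2 ?_
  have hsq : x ^ 2 ≤ y ^ 2 := by
    rw [← sq_abs x, ← sq_abs y]
    exact pow_le_pow_left₀ (abs_nonneg x) h 2
  simp only [sub_zero]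
  push_cast
  nlinarith

lemma SymmDec.indicator {f : ℝ → ℝ≥0∞} (hf : SymmDec f) (R : ℝ) :
    SymmDec (Set.indicator {x : ℝ | x ^ 2 ≤ R} f) := by
  intro x y h
  by_cases hy : y ∈ {x : ℝ | x ^ 2 ≤ R}
  · have hx : x ∈ {x : ℝ | x ^ 2 ≤ R} := by
      simp only [mem_setOf_eq] at hy ⊢
      calc x ^ 2 = |x| ^ 2 := (sq_abs x).symm
        _ ≤ |y| ^ 2 := pow_le_pow_left₀ (abs_nonneg x) h 2
        _ = y ^ 2 := sq_abs y
        _ ≤ R := hy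
    rw [Set.indicator_of_mem hy, Set.indicator_of_mem hx]
    exact hf x y h
  · rw [Set.indicator_of_notMem hy]
    exact zero_le

/-- symmetric-unimodal-like property of a measure on ℝ -/
def SD (ρ : Measure ℝ) : Prop :=
  ∀ r : ℝ, 0 ≤ r → ∀ m m' : ℝ, |m| ≤ |m'| →
    ρ (Icc (m' - r) (m' + r)) ≤ ρ (Icc (m - r) (m + r))

lemma sd_gaussian : SD (gaussianReal 0 1) := by
  intro r hr m m' h
  rw [gaussianReal_apply 0 one_ne_zero, gaussianReal_apply 0 one_ne_zero]
  exact core (measurable_gaussianPDF 0 1) symmDec_gaussianPDF hr h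


lemma sd_cond (n : ℕ) (a : ℝ) :
    SD (Measure.map (fun d : Fin (n+1) → ℝ => d 0)
      ((Measure.pi fun _ : Fin (n+1) => gaussianReal 0 1)[|{d : Fin (n+1) → ℝ |
        ∑ j, (d j) ^ 2 ≤ a}])) := by
  set ν : Measure (Fin (n+1) → ℝ) := Measure.pi fun _ => gaussianReal 0 1 with hν
  set ν' : Measure (Fin n → ℝ) := Measure.pi fun _ => gaussianReal 0 1 with hν'
  set B : Set (Fin (n+1) → ℝ) := {d | ∑ j, (d j) ^ 2 ≤ a} with hB
  have hBmeas : MeasurableSet B :=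
    measurableSet_le (Finset.measurable_sum _ fun j _ => (measurable_pi_apply j).pow_const 2)
      measurable_const
  have key : ∀ A : Set ℝ, MeasurableSet A →
      (Measure.map (fun d : Fin (n+1) → ℝ => d 0) (ν[|B])) A
        = (ν B)⁻¹ * ∫⁻ y, (∫⁻ x in A,
            (Set.indicator {x : ℝ | x ^ 2 ≤ a - ∑ j, (y j) ^ 2} (gaussianPDF 0 1)) x) ∂ν' := by
    intro A hA
    rw [Measure.map_apply (measurable_pi_apply 0) hA, cond_apply hBmeas]
    congr 1
    set e := MeasurableEquiv.piFinSuccAbove (fun _ : Fin (n+1) => ℝ) 0 with he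
    have hmp := measurePreserving_piFinSuccAbove (fun _ : Fin (n+1) => gaussianReal 0 1) 0
    set T : Set (ℝ × (Fin n → ℝ)) :=
      {p | p.1 ∈ A} ∩ {p | p.1 ^ 2 + ∑ j, (p.2 j) ^ 2 ≤ a} with hT
    have hTmeas : MeasurableSet T :=
      (hA.preimage measurable_fst).inter
        (measurableSet_le ((measurable_fst.pow_const 2).add
          (Finset.measurable_sum _ fun j _ =>
            ((measurable_pi_apply j).comp measurable_snd).pow_const 2)) measurable_const)
    have happ : ∀ d : Fin (n+1) → ℝ, e d = (d 0, fun j : Fin n => d j.succ) := by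
      intro d
      simp only [he, MeasurableEquiv.piFinSuccAbove_apply, Fin.insertNthEquiv,
        Fin.removeNth, Equiv.coe_fn_symm_mk]
      rfl
    have hpre : e ⁻¹' T = B ∩ (fun d : Fin (n+1) → ℝ => d 0) ⁻¹' A := by
      ext d
      simp only [mem_preimage, happ d, hT, hB, mem_inter_iff, mem_setOf_eq,
        Fin.sum_univ_succ]
      tauto
    have h1 : ν (B ∩ (fun d : Fin (n+1) → ℝ => d 0) ⁻¹' A)
        = ((gaussianReal 0 1).prod ν') T := by
      rw [← hpre]
      exact hmp.measure_preimage hTmeas.nullMeasurableSet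
    rw [h1, Measure.prod_apply_symm hTmeas]
    refine lintegral_congr fun y => ?_
    have hslice : (fun x : ℝ => (x, y)) ⁻¹' T
        = A ∩ {x : ℝ | x ^ 2 ≤ a - ∑ j, (y j) ^ 2} := by
      ext x
      simp only [mem_preimage, hT, mem_inter_iff, mem_setOf_eq]
      constructor <;> rintro ⟨h1, h2⟩ <;> exact ⟨h1, by linarith⟩
    have hCmeas : MeasurableSet {x : ℝ | x ^ 2 ≤ a - ∑ j, (y j) ^ 2} :=
      measurableSet_le (measurable_id.pow_const 2) measurable_const
    rw [hslice, gaussianReal_apply 0 one_ne_zero, lintegral_indicator hCmeas,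
      Measure.restrict_restrict hCmeas, Set.inter_comm]
  intro r hr m m' h
  rw [key _ measurableSet_Icc, key _ measurableSet_Icc]
  refine mul_le_mul_right (lintegral_mono fun y => ?_) _
  exact core ((measurable_gaussianPDF 0 1).indicator
      (measurableSet_le (measurable_id.pow_const 2) measurable_const))
    (symmDec_gaussianPDF.indicator _) hr h


lemma step1 {γ ρ : Measure ℝ} [SFinite γ] [SFinite ρ] (hρ : SD ρ)
    {β β' δ c : ℝ} (hβ : 0 ≤ β) (hββ : β ≤ β') (hδ : 0 ≤ δ) (hc : 0 ≤ c) :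
    (γ.prod ρ) {p : ℝ × ℝ | |β' * p.1 + δ * p.2| ≤ c}
      ≤ (γ.prod ρ) {p : ℝ × ℝ | |β * p.1 + δ * p.2| ≤ c} := by
  have hs : ∀ b : ℝ, MeasurableSet {p : ℝ × ℝ | |b * p.1 + δ * p.2| ≤ c} :=
    fun b => measurableSet_le (((measurable_fst.const_mul b).add
      (measurable_snd.const_mul δ)).abs) measurable_const
  rw [Measure.prod_apply (hs β'), Measure.prod_apply (hs β)]
  refine lintegral_mono fun x => ?_
  rcases eq_or_lt_of_le hδ with hδ0 | hδ0
  · refine measure_mono fun y hy => ?_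
    simp only [mem_preimage, mem_setOf_eq, ← hδ0, zero_mul, add_zero] at hy ⊢
    calc |β * x| = β * |x| := by rw [abs_mul, abs_of_nonneg hβ]
      _ ≤ β' * |x| := by gcongr
      _ = |β' * x| := by rw [abs_mul, abs_of_nonneg (hβ.trans hββ)]
      _ ≤ c := hy
  · have hIcc : ∀ b : ℝ, Prod.mk x ⁻¹' {p : ℝ × ℝ | |b * p.1 + δ * p.2| ≤ c}
        = Icc (-(b * x) / δ - c / δ) (-(b * x) / δ + c / δ) := by
      intro b
      ext y
      simp only [mem_preimage, mem_setOf_eq, mem_Icc, abs_le]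
      have e1 : -(b * x) / δ - c / δ = (-(b * x) - c) / δ := by ring
      have e2 : -(b * x) / δ + c / δ = (-(b * x) + c) / δ := by ring
      rw [e1, e2, div_le_iff₀ hδ0, le_div_iff₀ hδ0]
      constructor <;> intro h <;> constructor <;> nlinarith [h.1, h.2]
    rw [hIcc β', hIcc β]
    refine hρ (c / δ) (by positivity) (-(β * x) / δ) (-(β' * x) / δ) ?_
    rw [abs_div, abs_div, abs_neg, abs_neg, abs_mul, abs_mul, abs_of_nonneg hβ,
      abs_of_nonneg (hβ.trans hββ)]
    gcongr

lemma step2 {γ ρ : Measure ℝ} [SFinite γ] [SFinite ρ] (hγ : SD γ)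
    {β δ δ' c : ℝ} (hδ : 0 ≤ δ) (hδδ : δ ≤ δ') (hβ : 0 ≤ β) (hc : 0 ≤ c) :
    (γ.prod ρ) {p : ℝ × ℝ | |β * p.1 + δ' * p.2| ≤ c}
      ≤ (γ.prod ρ) {p : ℝ × ℝ | |β * p.1 + δ * p.2| ≤ c} := by
  have hs : ∀ b d : ℝ, MeasurableSet {p : ℝ × ℝ | |b * p.1 + d * p.2| ≤ c} :=
    fun b d => measurableSet_le (((measurable_fst.const_mul b).add
      (measurable_snd.const_mul d)).abs) measurable_const
  have hswap : ∀ b : ℝ, (γ.prod ρ) {p : ℝ × ℝ | |β * p.1 + b * p.2| ≤ c}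
      = (ρ.prod γ) {p : ℝ × ℝ | |b * p.1 + β * p.2| ≤ c} := by
    intro b
    rw [← Measure.prod_swap, Measure.map_apply measurable_swap (hs β b)]
    congr 1
    ext p
    simp only [mem_preimage, Prod.fst_swap, Prod.snd_swap, mem_setOf_eq]
    rw [add_comm]
  rw [hswap δ', hswap δ]
  exact step1 hγ hδ hδδ hβ hc

end Statement17Aux

open Statement17Aux in
theorem statement17 (K : ℕ) (hK : 0 < K) (a : ℝ) (ha : 0 < a)
    {Ω : Type*} [MeasurableSpace Ω] (μ : Measure Ω) [IsProbabilityMeasure μ]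
    (ε L : Ω → ℝ) (hmε : Measurable ε) (hmL : Measurable L)
    (hlawε : Measure.map ε μ = gaussianReal 0 1)
    (hlawL : Measure.map L μ
      = Measure.map (fun d : Fin K → ℝ => d ⟨0, hK⟩)
          ((Measure.pi fun _ : Fin K => gaussianReal 0 1)[|{d : Fin K → ℝ |
            ∑ j, (d j) ^ 2 ≤ a}]))
    (hindep : IndepFun ε L μ)
    (b₁ c₁ b₂ c₂ : ℝ) (hb₁ : 0 ≤ b₁) (h₁ : b₁ ≤ c₁) (hb₂ : 0 ≤ b₂) (h₂ : b₂ ≤ c₂) :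
    (∀ c : ℝ, 0 ≤ c →
        μ {ω | |c₁ * ε ω + c₂ * L ω| ≤ c} ≤ μ {ω | |b₁ * ε ω + b₂ * L ω| ≤ c}) ∧
      ∀ α : ℝ, α ∈ Set.Ioo (0 : ℝ) 1 →
        sInf {c : ℝ | 0 ≤ c ∧ 1 - α ≤ (μ {ω | |b₁ * ε ω + b₂ * L ω| ≤ c}).toReal}
          ≤ sInf {c : ℝ | 0 ≤ c ∧
              1 - α ≤ (μ {ω | |c₁ * ε ω + c₂ * L ω| ≤ c}).toReal} := by
  obtain ⟨n, rfl⟩ : ∃ n, K = n + 1 := ⟨K - 1, by omega⟩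
  have hzero : (⟨0, hK⟩ : Fin (n+1)) = 0 := rfl
  rw [hzero] at hlawL
  haveI hρprob : IsProbabilityMeasure (Measure.map L μ) :=
    Measure.isProbabilityMeasure_map hmL.aemeasurable
  have hρSD : SD (Measure.map L μ) := by rw [hlawL]; exact sd_cond n a
  have hγSD : SD (gaussianReal 0 1) := sd_gaussian
  have hmap : Measure.map (fun ω => (ε ω, L ω)) μ
      = (gaussianReal 0 1).prod (Measure.map L μ) := by
    rw [← hlawε]
    exact (indepFun_iff_map_prod_eq_prod_map_map hmε.aemeasurable hmL.aemeasurable).mp hindep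
  have hsΩ : ∀ b d c : ℝ, MeasurableSet {p : ℝ × ℝ | |b * p.1 + d * p.2| ≤ c} :=
    fun b d c => measurableSet_le (((measurable_fst.const_mul b).add
      (measurable_snd.const_mul d)).abs) measurable_const
  have hrepr : ∀ b d c : ℝ, μ {ω | |b * ε ω + d * L ω| ≤ c}
      = ((gaussianReal 0 1).prod (Measure.map L μ))
          {p : ℝ × ℝ | |b * p.1 + d * p.2| ≤ c} := by
    intro b d c
    rw [← hmap, Measure.map_apply (hmε.prodMk hmL) (hsΩ b d c)]
    rfl
  have part1 : ∀ c : ℝ, 0 ≤ c →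
      μ {ω | |c₁ * ε ω + c₂ * L ω| ≤ c} ≤ μ {ω | |b₁ * ε ω + b₂ * L ω| ≤ c} := by
    intro c hc
    rw [hrepr, hrepr]
    calc ((gaussianReal 0 1).prod (Measure.map L μ))
          {p : ℝ × ℝ | |c₁ * p.1 + c₂ * p.2| ≤ c}
        ≤ ((gaussianReal 0 1).prod (Measure.map L μ))
            {p : ℝ × ℝ | |b₁ * p.1 + c₂ * p.2| ≤ c} :=
          step1 hρSD hb₁ h₁ (hb₂.trans h₂) hc
      _ ≤ ((gaussianReal 0 1).prod (Measure.map L μ))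
            {p : ℝ × ℝ | |b₁ * p.1 + b₂ * p.2| ≤ c} :=
          step2 hγSD hb₂ h₂ hb₁ hc
  refine ⟨part1, ?_⟩
  intro α hα
  have hmono : Monotone (fun k : ℕ => {ω | |c₁ * ε ω + c₂ * L ω| ≤ (k : ℝ)}) := by
    intro i j hij ω hω
    simp only [Set.mem_setOf_eq] at hω ⊢
    exact le_trans hω (Nat.cast_le.mpr hij)
  have hunion : (⋃ k : ℕ, {ω | |c₁ * ε ω + c₂ * L ω| ≤ (k : ℝ)}) = Set.univ := by
    ext ω
    simp only [Set.mem_iUnion, Set.mem_setOf_eq, Set.mem_univ, iff_true]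
    exact exists_nat_ge _
  have htend := tendsto_measure_iUnion_atTop (μ := μ) hmono
  rw [hunion, measure_univ] at htend
  have hlt : ENNReal.ofReal (1 - α) < 1 := by
    rw [ENNReal.ofReal_lt_one]
    linarith [hα.1]
  obtain ⟨k, hk⟩ := (htend.eventually (eventually_gt_nhds hlt)).exists
  have hkmem : (k : ℝ) ∈ {c : ℝ | 0 ≤ c ∧
      1 - α ≤ (μ {ω | |c₁ * ε ω + c₂ * L ω| ≤ c}).toReal} :=
    ⟨Nat.cast_nonneg k,
      (ENNReal.ofReal_le_iff_le_toReal (measure_ne_top μ _)).mp hk.le⟩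
  refine csInf_le_csInf ⟨0, fun x hx => hx.1⟩ ⟨_, hkmem⟩ fun c hc => ?_
  exact ⟨hc.1, hc.2.trans (ENNReal.toReal_mono (measure_ne_top μ _) (part1 c hc.1))⟩
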